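/- There exists a symmetric n×n matrix A over K satisfying N_λ·A + A·N_λᵀ = 0 with det(A) ≠ 0 if and only if every even integer that occurs as a part of λ occurs an even number of times (equivalently, d(λ) = 0). -/

import Mathlib

open Matrix

/-- Partial sum `s_r = λ_1 + ⋯ + λ_{r-1}` (where the parts are `lam 0, lam 1, …`). -/
def psum {k : ℕ} (lam : Fin k → ℕ) (r : Fin k) : ℕ :=
  ∑ t ∈ Finset.univ.filter (fun t => t < r), lam t

/-- The `n × n` nilpotent Jordan matrix of type `λ`: its 1-indexed `(i, j)` entry is `1`
if `j = i + 1` and `s_r < i < i + 1 ≤ s_r + λ_r` for some `r`, and `0` otherwise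
(here written with 0-indexed `i`, `j`). -/
def jordanNilpotent (K : Type*) [Field K] (n k : ℕ) (lam : Fin k → ℕ) :
    Matrix (Fin n) (Fin n) K :=
  Matrix.of fun i j =>
    if (j : ℕ) = (i : ℕ) + 1 ∧
        ∃ r : Fin k, psum lam r ≤ (i : ℕ) ∧ (i : ℕ) + 2 ≤ psum lam r + lam r
      then 1 else 0

theorem psum_add_lt {n k : ℕ} (lam : Fin k → ℕ) (hn : ∑ r, lam r = n) (r : Fin k)
    (p : ℕ) (hp : p < lam r) : psum lam r + p < n := by
  have h1 : lam r + psum lam r ≤ ∑ t, lam t := by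
    rw [psum, ← Finset.sum_insert (by simp)]
    exact Finset.sum_le_sum_of_subset (Finset.subset_univ _)
  omega

/-- The index in `Fin n` of the `p`-th position (0-indexed) of the `r`-th block. -/
def blockIdx {n k : ℕ} (lam : Fin k → ℕ) (hn : ∑ r, lam r = n) (r : Fin k) (p : ℕ)
    (hp : p < lam r) : Fin n :=
  ⟨psum lam r + p, psum_add_lt lam hn r p hp⟩

-- block ordering
theorem psum_mono {k : ℕ} (lam : Fin k → ℕ) {r r' : Fin k} (h : r < r') :
    psum lam r + lam r ≤ psum lam r' := by
  have : insert r (Finset.univ.filter (fun t => t < r)) ⊆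
      Finset.univ.filter (fun t => t < r') := by
    intro t ht
    simp only [Finset.mem_insert, Finset.mem_filter, Finset.mem_univ, true_and] at *
    rcases ht with rfl | ht
    · exact h
    · exact ht.trans h
  have := Finset.sum_le_sum_of_subset (f := lam) this
  rw [Finset.sum_insert (by simp)] at this
  unfold psum
  omega

theorem blockIdx_inj {n k : ℕ} (lam : Fin k → ℕ) (hn : ∑ r, lam r = n)
    {r r' : Fin k} {p q : ℕ} (hp : p < lam r) (hq : q < lam r')
    (h : blockIdx lam hn r p hp = blockIdx lam hn r' q hq) : r = r' ∧ p = q := by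
  have hv : psum lam r + p = psum lam r' + q := congrArg Fin.val h
  rcases lt_trichotomy r r' with hlt | rfl | hlt
  · have := psum_mono lam hlt; omega
  · exact ⟨rfl, by omega⟩
  · have := psum_mono lam hlt; omega

/-- uniqueness of the block containing a given index -/
theorem block_unique {n k : ℕ} (lam : Fin k → ℕ) (hn : ∑ r, lam r = n)
    {r r'' : Fin k} {p : ℕ} (hp : p < lam r)
    (h1 : psum lam r'' ≤ psum lam r + p)
    (h2 : psum lam r + p + 2 ≤ psum lam r'' + lam r'') : r'' = r ∧ p + 2 ≤ lam r := by
  rcases lt_trichotomy r r'' with hlt | rfl | hlt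
  · have := psum_mono lam hlt; omega
  · exact ⟨rfl, by omega⟩
  · have := psum_mono lam hlt; omega

noncomputable def idxEquiv {n k : ℕ} (lam : Fin k → ℕ) (hn : ∑ r, lam r = n) :
    ((r : Fin k) × Fin (lam r)) ≃ Fin n :=
  Equiv.ofBijective (fun y => blockIdx lam hn y.1 y.2.1 y.2.2)
    ((Fintype.bijective_iff_injective_and_card _).2
      ⟨fun y z h => by
          obtain ⟨h1, h2⟩ := blockIdx_inj lam hn y.2.2 z.2.2 h
          cases y; cases z
          subst h1
          simp only [Sigma.mk.inj_iff, heq_eq_eq, true_and]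
          exact Fin.ext h2,
        by simp [hn]⟩)

theorem idxEquiv_apply {n k : ℕ} (lam : Fin k → ℕ) (hn : ∑ r, lam r = n)
    (r : Fin k) (p : Fin (lam r)) :
    idxEquiv lam hn ⟨r, p⟩ = blockIdx lam hn r p.1 p.2 := rfl

theorem idxEquiv_symm_apply {n k : ℕ} (lam : Fin k → ℕ) (hn : ∑ r, lam r = n)
    (r : Fin k) (p : ℕ) (hp : p < lam r) :
    (idxEquiv lam hn).symm (blockIdx lam hn r p hp) = ⟨r, ⟨p, hp⟩⟩ := by
  rw [Equiv.symm_apply_eq]; rfl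

section
variable {K : Type*} [Field K] {n k : ℕ} (lam : Fin k → ℕ) (hn : ∑ r, lam r = n)

theorem jordan_apply (i j : Fin n) :
    jordanNilpotent K n k lam i j =
      if (j : ℕ) = (i : ℕ) + 1 ∧
          ∃ r : Fin k, psum lam r ≤ (i : ℕ) ∧ (i : ℕ) + 2 ≤ psum lam r + lam r
        then 1 else 0 := rfl

theorem jordan_mul_apply (A : Matrix (Fin n) (Fin n) K) (r : Fin k) (p : ℕ)
    (hp : p < lam r) (j : Fin n) :
    (jordanNilpotent K n k lam * A) (blockIdx lam hn r p hp) j =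
      if h : p + 1 < lam r then A (blockIdx lam hn r (p + 1) h) j else 0 := by
  rw [Matrix.mul_apply]
  by_cases h : p + 1 < lam r
  · rw [dif_pos h]
    rw [Finset.sum_eq_single (blockIdx lam hn r (p + 1) h)]
    · rw [jordan_apply, if_pos, one_mul]
      constructor
      · show psum lam r + (p + 1) = (psum lam r + p) + 1; omega
      · exact ⟨r, Nat.le_add_right _ _, by show psum lam r + p + 2 ≤ _; omega⟩
    · intro l _ hl
      rw [jordan_apply, if_neg, zero_mul]
      rintro ⟨h1, -⟩
      exact hl (Fin.ext (by simpa [blockIdx] using h1.symm ▸ rfl))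
    · simp
  · rw [dif_neg h]
    apply Finset.sum_eq_zero
    intro l _
    rw [jordan_apply, if_neg, zero_mul]
    rintro ⟨-, r'', hr1, hr2⟩
    exact absurd (block_unique lam hn hp hr1 hr2).2 (by omega)

theorem mul_jordan_transpose_apply (A : Matrix (Fin n) (Fin n) K) (r' : Fin k) (q : ℕ)
    (hq : q < lam r') (i : Fin n) :
    (A * (jordanNilpotent K n k lam)ᵀ) i (blockIdx lam hn r' q hq) =
      if h : q + 1 < lam r' then A i (blockIdx lam hn r' (q + 1) h) else 0 := by
  rw [Matrix.mul_apply]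
  by_cases h : q + 1 < lam r'
  · rw [dif_pos h]
    rw [Finset.sum_eq_single (blockIdx lam hn r' (q + 1) h)]
    · rw [Matrix.transpose_apply, jordan_apply, if_pos, mul_one]
      constructor
      · show psum lam r' + (q + 1) = (psum lam r' + q) + 1; omega
      · exact ⟨r', Nat.le_add_right _ _, by show psum lam r' + q + 2 ≤ _; omega⟩
    · intro l _ hl
      rw [Matrix.transpose_apply, jordan_apply, if_neg, mul_zero]
      rintro ⟨h1, -⟩
      exact hl (Fin.ext (by simpa [blockIdx] using h1.symm ▸ rfl))
    · simp
  · rw [dif_neg h]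
    apply Finset.sum_eq_zero
    intro l _
    rw [Matrix.transpose_apply, jordan_apply, if_neg, mul_zero]
    rintro ⟨-, r'', hr1, hr2⟩
    exact absurd (block_unique lam hn hq hr1 hr2).2 (by omega)

/-- The basic relation satisfied by any `A` with `N A + A Nᵀ = 0`. -/
theorem rel_of_eq (A : Matrix (Fin n) (Fin n) K)
    (hA : jordanNilpotent K n k lam * A + A * (jordanNilpotent K n k lam)ᵀ = 0)
    (r : Fin k) (p : ℕ) (hp : p < lam r) (r' : Fin k) (q : ℕ) (hq : q < lam r') :
    (if h : p + 1 < lam r then A (blockIdx lam hn r (p + 1) h) (blockIdx lam hn r' q hq)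
        else 0) +
      (if h : q + 1 < lam r' then A (blockIdx lam hn r p hp) (blockIdx lam hn r' (q + 1) h)
        else 0) = 0 := by
  have := congrFun (congrFun hA (blockIdx lam hn r p hp)) (blockIdx lam hn r' q hq)
  rw [Matrix.add_apply, Matrix.zero_apply, jordan_mul_apply lam hn A r p hp,
    mul_jordan_transpose_apply lam hn A r' q hq] at this
  exact this

end
section
variable {K : Type*} [Field K] {n k : ℕ} (lam : Fin k → ℕ) (hn : ∑ r, lam r = n)
  (A : Matrix (Fin n) (Fin n) K)
  (hA : jordanNilpotent K n k lam * A + A * (jordanNilpotent K n k lam)ᵀ = 0)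

include hA

/-- Last row of a block pairs to zero with everything except column 0. -/
theorem last_row_zero (r : Fin k) (hr : 0 < lam r) (r' : Fin k) (q : ℕ)
    (hq : q < lam r') (hq1 : 1 ≤ q) :
    A (blockIdx lam hn r (lam r - 1) (by omega)) (blockIdx lam hn r' q hq) = 0 := by
  have := rel_of_eq lam hn A hA r (lam r - 1) (by omega) r' (q - 1) (by omega)
  rw [dif_neg (by omega), dif_pos (by omega), zero_add] at this
  convert this using 3
  omega

theorem shift_eq (r : Fin k) (p : ℕ) (hp : p + 1 < lam r) (r' : Fin k) (q : ℕ)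
    (hq : q < lam r') (hq1 : 1 ≤ q) :
    A (blockIdx lam hn r p (by omega)) (blockIdx lam hn r' q hq) =
      -A (blockIdx lam hn r (p + 1) hp) (blockIdx lam hn r' (q - 1) (by omega)) := by
  have := rel_of_eq lam hn A hA r p (by omega) r' (q - 1) (by omega)
  rw [dif_pos hp, dif_pos (by omega : q - 1 + 1 < lam r')] at this
  have h2 : q - 1 + 1 = q := by omega
  rw [show (blockIdx lam hn r' (q - 1 + 1) (by omega)) = blockIdx lam hn r' q hq from
    Fin.ext (by simp [blockIdx]; omega)] at this
  exact eq_neg_of_add_eq_zero_right this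

/-- Vanishing below the antidiagonal, version with the row block size. -/
theorem vanish_row (r : Fin k) (r' : Fin k) (q p : ℕ) (hp : p < lam r)
    (hq : q < lam r') (hge : lam r ≤ p + q) :
    A (blockIdx lam hn r p hp) (blockIdx lam hn r' q hq) = 0 := by
  induction q generalizing p with
  | zero => omega
  | succ q ih =>
    by_cases hp1 : p + 1 < lam r
    · rw [shift_eq lam hn A hA r p hp1 r' (q + 1) hq (by omega)]
      simp only [Nat.add_sub_cancel]
      rw [ih (p + 1) hp1 (by omega) (by omega)]
      ring
    · have hpe : p = lam r - 1 := by omega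
      subst hpe
      exact last_row_zero lam hn A hA r (by omega) r' (q + 1) hq (by omega)

/-- Entries on the top antidiagonal of a pair of blocks of equal size `m` alternate. -/
theorem antidiag_eq (r r' : Fin k) (m : ℕ) (hr : lam r = m) (hr' : lam r' = m)
    (hm : 0 < m) (p : ℕ) (hp : p < m) :
    A (blockIdx lam hn r p (by omega)) (blockIdx lam hn r' (m - 1 - p) (by omega)) =
      (-1 : K) ^ p * A (blockIdx lam hn r 0 (by omega)) (blockIdx lam hn r' (m - 1) (by omega)) := by
  induction p with
  | zero => simp
  | succ p ih =>
    have h1 : A (blockIdx lam hn r p (by omega)) (blockIdx lam hn r' (m - 1 - p) (by omega)) =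
        -A (blockIdx lam hn r (p + 1) (by omega))
          (blockIdx lam hn r' (m - 1 - p - 1) (by omega)) :=
      shift_eq lam hn A hA r p (by omega) r' (m - 1 - p) (by omega) (by omega)
    have h2 : m - 1 - p - 1 = m - 1 - (p + 1) := by omega
    rw [ih (by omega)] at h1
    rw [show (blockIdx lam hn r' (m - 1 - p - 1) (by omega)) =
        blockIdx lam hn r' (m - 1 - (p + 1)) (by omega) from Fin.ext (by simp [blockIdx, h2])]
      at h1
    have := congrArg Neg.neg h1
    rw [neg_neg] at this
    rw [← this]
    ring

end
section
variable {K : Type*} [Field K] {I : Type*} [Fintype I] [DecidableEq I]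

/-- If the index set is graded with total weight zero and `A` vanishes in positive total
degree, then only the degree-zero part contributes to the determinant. -/
theorem det_eq_det_graded (f : I → ℤ) (hf : ∑ i, f i = 0) (A : Matrix I I K)
    (h0 : ∀ i j, 0 < f i + f j → A i j = 0) :
    A.det = Matrix.det (Matrix.of fun i j => if f i + f j = 0 then A i j else 0) := by
  rw [Matrix.det_apply, Matrix.det_apply]
  apply Finset.sum_congr rfl
  intro σ _
  congr 1
  by_cases hall : ∀ i, f (σ i) + f i = 0
  · apply Finset.prod_congr rfl
    intro i _
    simp [Matrix.of_apply, hall i]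
  · push_neg at hall
    obtain ⟨i₀, hi₀⟩ := hall
    have hsum : ∑ i, (f (σ i) + f i) = 0 := by
      rw [Finset.sum_add_distrib, Equiv.sum_comp σ f, hf]; simp
    have hpos : ∃ i, 0 < f (σ i) + f i := by
      by_contra hc
      push_neg at hc
      have := Finset.sum_eq_zero_iff_of_nonpos (f := fun i => f (σ i) + f i)
        (s := Finset.univ) (fun i _ => hc i)
      exact hi₀ ((this.1 hsum) i₀ (Finset.mem_univ _))
    obtain ⟨i₁, hi₁⟩ := hpos
    trans (0 : K)
    · exact Finset.prod_eq_zero (Finset.mem_univ i₁) (h0 _ _ hi₁)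
    · symm
      exact Finset.prod_eq_zero (Finset.mem_univ i₁)
        (by simp [Matrix.of_apply, if_neg (by omega : ¬ f (σ i₁) + f i₁ = 0)])

end
section
variable {K : Type*} [Field K] {n k : ℕ} (lam : Fin k → ℕ) (hn : ∑ r, lam r = n)
  (A : Matrix (Fin n) (Fin n) K)
  (hA : jordanNilpotent K n k lam * A + A * (jordanNilpotent K n k lam)ᵀ = 0)

include hA

theorem vanish_min (hsym : A.IsSymm) (r r' : Fin k) (p q : ℕ) (hp : p < lam r)
    (hq : q < lam r') (h : min (lam r) (lam r') ≤ p + q) :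
    A (blockIdx lam hn r p hp) (blockIdx lam hn r' q hq) = 0 := by
  rcases le_or_gt (lam r) (p + q) with h1 | h1
  · exact vanish_row lam hn A hA r r' q p hp hq h1
  · have h2 : lam r' ≤ q + p := by omega
    have hv := vanish_row lam hn A hA r' r p q hq hp h2
    have := congrFun (congrFun hsym (blockIdx lam hn r' q hq)) (blockIdx lam hn r p hp)
    rw [Matrix.transpose_apply] at this
    rw [this]; exact hv

end

theorem forward_direction {K : Type*} [Field K] [CharZero K] {n k : ℕ}
    (lam : Fin k → ℕ) (hpos : ∀ r, 1 ≤ lam r) (hn : ∑ r, lam r = n)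
    (A : Matrix (Fin n) (Fin n) K) (hsym : A.IsSymm)
    (hA : jordanNilpotent K n k lam * A + A * (jordanNilpotent K n k lam)ᵀ = 0)
    (hdet : A.det ≠ 0) :
    ∀ m : ℕ, Even m → Even ((Finset.univ.filter fun r => lam r = m)).card := by
  intro m hm
  by_contra hodd
  -- `m ≥ 1` since the filter is nonempty
  have hS : (Finset.univ.filter fun r => lam r = m).Nonempty := by
    rw [Finset.nonempty_iff_ne_empty]
    intro h
    rw [h] at hodd
    exact hodd (by simp)
  obtain ⟨r₀, hr₀⟩ := hS
  have hr₀m : lam r₀ = m := (Finset.mem_filter.1 hr₀).2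
  have hm1 : 1 ≤ m := hr₀m ▸ hpos r₀
  set e := idxEquiv lam hn with he
  set f : Fin n → ℤ := fun i => 2 * ((e.symm i).2 : ℤ) + 1 - lam (e.symm i).1 with hf
  have hfy : ∀ (r : Fin k) (p : Fin (lam r)), f (e ⟨r, p⟩) = 2 * (p : ℤ) + 1 - lam r := by
    intro r p
    simp only [hf]
    rw [Equiv.symm_apply_apply]
  -- total weight is zero
  have hfsum : ∑ i, f i = 0 := by
    rw [← Equiv.sum_comp e f, ← Finset.univ_sigma_univ, Finset.sum_sigma]
    apply Finset.sum_eq_zero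
    intro r _
    have : ∀ p : Fin (lam r), f (e ⟨r, p⟩) = 2 * (p : ℤ) + 1 - lam r := hfy r
    rw [Finset.sum_congr rfl (fun p _ => this p)]
    have h1 : ∀ t : ℕ, ∑ p ∈ Finset.range t, (2 * (p : ℤ) + 1) = (t : ℤ) ^ 2 := by
      intro t
      induction t with
      | zero => simp
      | succ t ih => rw [Finset.sum_range_succ, ih]; push_cast; ring
    rw [Fin.sum_univ_eq_sum_range (fun p => 2 * (p : ℤ) + 1 - (lam r : ℤ)),
      Finset.sum_sub_distrib, h1, Finset.sum_const, Finset.card_range]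
    simp [nsmul_eq_mul, sq]
  -- A vanishes in positive degree
  have h0 : ∀ i j, 0 < f i + f j → A i j = 0 := by
    intro i j hpos'
    obtain ⟨⟨r, p⟩, rfl⟩ : ∃ y, e y = i := ⟨e.symm i, e.apply_symm_apply i⟩
    obtain ⟨⟨r', q⟩, rfl⟩ : ∃ y, e y = j := ⟨e.symm j, e.apply_symm_apply j⟩
    rw [hfy r p, hfy r' q] at hpos'
    rw [he, idxEquiv_apply, idxEquiv_apply]
    exact vanish_min lam hn A hA hsym r r' p q p.2 q.2 (by omega)
  set A0 : Matrix (Fin n) (Fin n) K :=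
    Matrix.of fun i j => if f i + f j = 0 then A i j else 0 with hA0
  have hdet0 : A0.det ≠ 0 := by
    rw [hA0, ← det_eq_det_graded f hfsum A h0]; exact hdet
  have hmlt : ∀ r : Fin k, lam r = m → m - 1 < lam r := by intro r h; omega
  set C : Matrix {r : Fin k // lam r = m} {r : Fin k // lam r = m} K :=
    fun r r' => A (blockIdx lam hn r.1 0 (hpos r.1))
      (blockIdx lam hn r'.1 (m - 1) (hmlt r'.1 r'.2)) with hC
  have hCskew : Cᵀ = -C := by
    ext r r'
    rw [Matrix.transpose_apply, Matrix.neg_apply, hC]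
    simp only
    have hsy := congrFun (congrFun hsym (blockIdx lam hn r.1 (m - 1) (hmlt r.1 r.2)))
      (blockIdx lam hn r'.1 0 (hpos r'.1))
    rw [Matrix.transpose_apply] at hsy
    rw [hsy]
    have had := antidiag_eq lam hn A hA r.1 r'.1 m r.2 r'.2 (by omega) (m - 1) (by omega)
    rw [show (blockIdx lam hn r'.1 (m - 1 - (m - 1)) (by omega)) =
      blockIdx lam hn r'.1 0 (hpos r'.1) from Fin.ext (by simp [blockIdx])] at had
    rw [had]
    have hodd1 : Odd (m - 1) := Nat.Even.sub_odd hm1 hm odd_one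
    rw [hodd1.neg_one_pow]
    ring
  have hcard : Odd (Fintype.card {r : Fin k // lam r = m}) := by
    rw [Fintype.card_subtype]
    exact Nat.not_even_iff_odd.1 hodd
  have hdetC : C.det = 0 := by
    have h1 : C.det = (-C).det := by rw [← hCskew, Matrix.det_transpose]
    rw [Matrix.det_neg, hcard.neg_one_pow] at h1
    have h2 : (2 : K) * C.det = 0 := by linear_combination h1
    exact (mul_eq_zero.1 h2).resolve_left two_ne_zero
  obtain ⟨x, hx0, hCx⟩ := Matrix.exists_mulVec_eq_zero_iff.2 hdetC
  set vv : ((r : Fin k) × Fin (lam r)) → K := fun y =>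
    if h : lam y.1 = m ∧ (y.2 : ℕ) = m - 1 then x ⟨y.1, h.1⟩ else 0 with hvv
  set v : Fin n → K := fun i => vv (e.symm i) with hv
  have hvy : ∀ y, v (e y) = vv y := fun y => congrArg vv (e.symm_apply_apply y)
  have hv0 : v ≠ 0 := by
    obtain ⟨r₁, hr₁⟩ := Function.ne_iff.1 hx0
    intro hcontra
    have hb : m - 1 < lam r₁.1 := hmlt r₁.1 r₁.2
    have h1 := congrFun hcontra (e ⟨r₁.1, ⟨m - 1, hb⟩⟩)
    rw [hvy, Pi.zero_apply, hvv] at h1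
    simp only at h1
    rw [dif_pos (⟨r₁.2, trivial⟩ : lam r₁.1 = m ∧ True)] at h1
    have heq : (⟨r₁.1, r₁.2⟩ : {r : Fin k // lam r = m}) = r₁ := Subtype.ext rfl
    rw [heq] at h1
    exact hr₁ (by simpa using h1)
  have hAv : A0.mulVec v = 0 := by
    funext i
    rw [Pi.zero_apply]
    show ∑ j, A0 i j * v j = 0
    rw [← Equiv.sum_comp e (fun j => A0 i j * v j)]
    obtain ⟨⟨r', q⟩, rfl⟩ : ∃ y, e y = i := ⟨e.symm i, e.apply_symm_apply i⟩
    by_cases hcase : lam r' = m ∧ (q : ℕ) = 0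
    · -- main case: row is the start of a size-`m` block
      obtain ⟨hc1, hc2⟩ := hcase
      have hcase : lam r' = m ∧ (q : ℕ) = 0 := ⟨hc1, hc2⟩
      rw [← Finset.univ_sigma_univ, Finset.sum_sigma]
      have hterm : ∀ r : Fin k,
          (∑ p : Fin (lam r), A0 (e ⟨r', q⟩) (e ⟨r, p⟩) * v (e ⟨r, p⟩)) =
          if h : lam r = m then C ⟨r', hcase.1⟩ ⟨r, h⟩ * x ⟨r, h⟩ else 0 := by
        intro r
        by_cases h : lam r = m
        · rw [dif_pos h]
          rw [Finset.sum_eq_single (⟨m - 1, hmlt r h⟩ : Fin (lam r))]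
          · rw [hvy, hvv]
            simp only
            rw [dif_pos (⟨h, trivial⟩ : lam r = m ∧ True)]
            congr 1
            rw [hA0]
            simp only [Matrix.of_apply]
            rw [if_pos (by rw [hfy, hfy]; simp only [Fin.val_mk]; omega)]
            rw [hC]
            simp only
            rw [he, idxEquiv_apply, idxEquiv_apply]
            congr 1
            exact Fin.ext (by simp [blockIdx, hcase.2])
          · intro p _ hp
            rw [hvy, hvv]
            simp only
            rw [dif_neg, mul_zero]
            rintro ⟨-, hp2⟩
            exact hp (Fin.ext hp2)
          · simp
        · rw [dif_neg h]
          apply Finset.sum_eq_zero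
          intro p _
          rw [hvy, hvv]
          simp only
          rw [dif_neg (fun hc => h hc.1), mul_zero]
      rw [Finset.sum_congr rfl (fun r _ => hterm r)]
      have hCx' := congrFun hCx ⟨r', hcase.1⟩
      rw [Pi.zero_apply] at hCx'
      have hCx'' : ∑ t : {r : Fin k // lam r = m}, C ⟨r', hcase.1⟩ t * x t = 0 := hCx'
      refine Eq.trans ?_ hCx''
      rw [← Fintype.sum_subtype_add_sum_subtype (fun r => lam r = m)
        (fun r => if h : lam r = m then C ⟨r', hcase.1⟩ ⟨r, h⟩ * x ⟨r, h⟩ else 0)]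
      have hz : (∑ t : {r : Fin k // ¬ lam r = m},
          if h : lam t.1 = m then C ⟨r', hcase.1⟩ ⟨t.1, h⟩ * x ⟨t.1, h⟩ else 0) = 0 :=
        Finset.sum_eq_zero fun t _ => dif_neg t.2
      rw [hz, add_zero]
      apply Finset.sum_congr rfl
      intro t _
      rw [dif_pos t.2]
    · apply Finset.sum_eq_zero
      rintro ⟨r, p⟩ -
      rw [hvy, hvv]
      simp only
      by_cases hy : lam r = m ∧ (p : ℕ) = m - 1
      · rw [dif_pos hy]
        have hA0e : A0 (e ⟨r', q⟩) (e ⟨r, p⟩) = 0 := by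
          rw [hA0]
          simp only [Matrix.of_apply]
          by_cases hfz : f (e ⟨r', q⟩) + f (e ⟨r, p⟩) = 0
          · rw [if_pos hfz]
            rw [hfy, hfy] at hfz
            have hq1 : 1 ≤ (q : ℕ) := by
              rcases Nat.eq_zero_or_pos (q : ℕ) with hz | hz
              · exact absurd ⟨by omega, hz⟩ hcase
              · exact hz
            rw [he, idxEquiv_apply, idxEquiv_apply]
            exact vanish_min lam hn A hA hsym r' r q.1 p.1 q.2 p.2 (by omega)
          · rw [if_neg hfz]
        rw [hA0e, zero_mul]
      · rw [dif_neg hy, mul_zero]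
  exact hdet0 (Matrix.exists_mulVec_eq_zero_iff.1 ⟨v, hv0, hAv⟩)
section
variable {k : ℕ} (lam : Fin k → ℕ)

/-- position of `r` within its group of equal parts -/
def gpos (r : Fin k) : ℕ := (Finset.univ.filter fun t => t < r ∧ lam t = lam r).card

theorem lam_sandwich (hmono : Antitone lam) {t u w : Fin k} (h1 : t ≤ u) (h2 : u ≤ w)
    (h3 : lam t = lam w) : lam u = lam w :=
  le_antisymm (h3 ▸ hmono h1) (hmono h2)

theorem gpos_succ (hmono : Antitone lam) {r s : Fin k} (hrs : (s : ℕ) = (r : ℕ) + 1)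
    (hl : lam s = lam r) : gpos lam s = gpos lam r + 1 := by
  have hkey : (Finset.univ.filter fun t => t < s ∧ lam t = lam s) =
      insert r (Finset.univ.filter fun t => t < r ∧ lam t = lam r) := by
    ext t
    simp only [Finset.mem_filter, Finset.mem_univ, true_and, Finset.mem_insert]
    constructor
    · rintro ⟨ht1, ht2⟩
      rcases eq_or_lt_of_le (show (t:ℕ) ≤ (r:ℕ) by
        have := (Fin.lt_def).1 ht1; omega) with h | h
      · exact Or.inl (Fin.ext h)
      · exact Or.inr ⟨Fin.lt_def.2 h, by rw [ht2, hl]⟩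
    · rintro (rfl | ⟨ht1, ht2⟩)
      · exact ⟨Fin.lt_def.2 (by omega), hl.symm⟩
      · exact ⟨Fin.lt_def.2 (by have := Fin.lt_def.1 ht1; omega), by rw [ht2, hl]⟩
  rw [gpos, hkey, Finset.card_insert_of_notMem (by simp), gpos]

theorem next_block (hmono : Antitone lam) (r : Fin k)
    (hc : Even ((Finset.univ.filter fun t => lam t = lam r).card))
    (hg : Even (gpos lam r)) :
    ∃ h : (r : ℕ) + 1 < k, lam ⟨(r : ℕ) + 1, h⟩ = lam r ∧
      gpos lam ⟨(r : ℕ) + 1, h⟩ = gpos lam r + 1 := by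
  have hex : ∃ t : Fin k, r < t ∧ lam t = lam r := by
    by_contra hcon
    push_neg at hcon
    have hkey : (Finset.univ.filter fun t => lam t = lam r) =
        insert r (Finset.univ.filter fun t => t < r ∧ lam t = lam r) := by
      ext t
      simp only [Finset.mem_filter, Finset.mem_univ, true_and, Finset.mem_insert]
      constructor
      · intro ht
        rcases lt_trichotomy t r with h | h | h
        · exact Or.inr ⟨h, ht⟩
        · exact Or.inl h
        · exact absurd ht (hcon t h)
      · rintro (rfl | ⟨-, ht⟩)
        · rfl
        · exact ht
    rw [hkey, Finset.card_insert_of_notMem (by simp)] at hc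
    rw [Nat.even_add_one] at hc
    exact hc hg
  obtain ⟨t, ht1, ht2⟩ := hex
  have hb : (r : ℕ) + 1 < k := by
    have h1 := Fin.lt_def.1 ht1
    have h2 := t.2
    omega
  have hls : lam ⟨(r : ℕ) + 1, hb⟩ = lam r := by
    have h1 : r ≤ (⟨(r : ℕ) + 1, hb⟩ : Fin k) := Fin.le_def.2 (by simp)
    have h2 : (⟨(r : ℕ) + 1, hb⟩ : Fin k) ≤ t := Fin.le_def.2 (by
      have := Fin.lt_def.1 ht1; simp; omega)
    calc lam ⟨(r : ℕ) + 1, hb⟩ = lam t := le_antisymm (ht2 ▸ hmono h1)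
            (by rw [show lam t = lam r from ht2]; exact ht2 ▸ hmono h2)
      _ = lam r := ht2
  exact ⟨hb, hls, gpos_succ lam hmono rfl hls⟩

theorem prev_block (hmono : Antitone lam) (r : Fin k) (hg : Odd (gpos lam r)) :
    1 ≤ (r : ℕ) ∧ ∀ h : (r : ℕ) - 1 < k, lam ⟨(r : ℕ) - 1, h⟩ = lam r ∧
      gpos lam ⟨(r : ℕ) - 1, h⟩ + 1 = gpos lam r := by
  have h1 : 1 ≤ gpos lam r := by
    rcases hg with ⟨t, ht⟩; omega
  have hne : (Finset.univ.filter fun t => t < r ∧ lam t = lam r).Nonempty := by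
    rw [← Finset.card_pos, ← gpos]; omega
  obtain ⟨t, ht⟩ := hne
  rw [Finset.mem_filter] at ht
  obtain ⟨-, ht1, ht2⟩ := ht
  have hr1 : 1 ≤ (r : ℕ) := by have := Fin.lt_def.1 ht1; omega
  refine ⟨hr1, fun h => ?_⟩
  have hl : lam ⟨(r : ℕ) - 1, h⟩ = lam r := by
    refine lam_sandwich lam hmono (t := t) (w := r) ?_ ?_ ht2
    · exact Fin.le_def.2 (by have := Fin.lt_def.1 ht1; simp; omega)
    · exact Fin.le_def.2 (by simp)
  exact ⟨hl, (gpos_succ lam hmono (r := ⟨(r : ℕ) - 1, h⟩) (s := r) (by simp; omega) hl.symm).symm⟩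

variable (hmono : Antitone lam)
  (hcard : ∀ m : ℕ, Even m → Even ((Finset.univ.filter fun r => lam r = m)).card)

/-- the pairing involution on blocks -/
noncomputable def bpair : Fin k → Fin k := fun r =>
  if he : Even (lam r) then
    (if hg : Even (gpos lam r) then
      ⟨(r : ℕ) + 1, (next_block lam hmono r (by simpa using hcard (lam r) he) hg).choose⟩
    else ⟨(r : ℕ) - 1, lt_of_le_of_lt (Nat.sub_le _ _) r.2⟩)
  else r

theorem bpair_spec (r : Fin k) :
    lam (bpair lam hmono hcard r) = lam r ∧ bpair lam hmono hcard (bpair lam hmono hcard r) = r ∧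
      (Even (lam r) → bpair lam hmono hcard r ≠ r) := by
  by_cases he : Even (lam r)
  · by_cases hg : Even (gpos lam r)
    · have hch := (next_block lam hmono r (by simpa using hcard (lam r) he) hg).choose_spec
      set s : Fin k := ⟨(r : ℕ) + 1,
        (next_block lam hmono r (by simpa using hcard (lam r) he) hg).choose⟩ with hs
      have h1 : bpair lam hmono hcard r = s := by rw [bpair, dif_pos he, dif_pos hg]
      have hls : lam s = lam r := hch.1
      have hgs : gpos lam s = gpos lam r + 1 := hch.2
      have h2 : bpair lam hmono hcard s = r := by
        rw [bpair, dif_pos (hls ▸ he), dif_neg (by rw [hgs, Nat.even_add_one]; exact fun hc => hc hg)]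
        exact Fin.ext (by simp [hs])
      refine ⟨h1 ▸ hls, by rw [h1, h2], fun _ => ?_⟩
      rw [h1, hs]
      intro hc
      have := congrArg Fin.val hc
      simp at this
    · obtain ⟨hr1, hprev⟩ := prev_block lam hmono r (Nat.not_even_iff_odd.1 hg)
      have hb : (r : ℕ) - 1 < k := lt_of_le_of_lt (Nat.sub_le _ _) r.2
      obtain ⟨hl, hgp⟩ := hprev hb
      set s : Fin k := ⟨(r : ℕ) - 1, hb⟩ with hs
      have h1 : bpair lam hmono hcard r = s := by rw [bpair, dif_pos he, dif_neg hg]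
      have hgs : Even (gpos lam s) := by
        rcases Nat.even_or_odd (gpos lam s) with h | h
        · exact h
        · exfalso; apply hg; rw [← hgp]; rcases h with ⟨t, ht⟩; exact ⟨t + 1, by omega⟩
      have h2 : bpair lam hmono hcard s = r := by
        rw [bpair, dif_pos (hl ▸ he), dif_pos hgs]
        exact Fin.ext (by simp [hs]; omega)
      refine ⟨h1 ▸ hl, by rw [h1, h2], fun _ => ?_⟩
      rw [h1, hs]
      intro hc
      have := congrArg Fin.val hc
      simp at this
      omega
  · have h1 : bpair lam hmono hcard r = r := by rw [bpair, dif_neg he]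
    exact ⟨by rw [h1], by rw [h1, h1], fun hc => absurd hc he⟩

theorem lam_bpair (r : Fin k) : lam (bpair lam hmono hcard r) = lam r :=
  (bpair_spec lam hmono hcard r).1

theorem bpair_bpair (r : Fin k) :
    bpair lam hmono hcard (bpair lam hmono hcard r) = r :=
  (bpair_spec lam hmono hcard r).2.1

theorem bpair_ne (r : Fin k) (he : Even (lam r)) : bpair lam hmono hcard r ≠ r :=
  (bpair_spec lam hmono hcard r).2.2 he

theorem lam_odd_of_fixed (r : Fin k) (hfix : bpair lam hmono hcard r = r) : ¬ Even (lam r) :=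
  fun he => bpair_ne lam hmono hcard r he hfix

end
theorem negpow_eq {K : Type*} [Field K] {a b : ℕ} (h : Even (a + b)) :
    (-1 : K) ^ a = (-1 : K) ^ b := by
  have h1 : (-1 : K) ^ (a + b) = 1 := h.neg_one_pow
  rw [pow_add] at h1
  have h2 : (-1 : K) ^ b * (-1 : K) ^ b = 1 := by
    rw [← pow_add]
    have hbb : Even (b + b) := ⟨b, rfl⟩
    exact hbb.neg_one_pow
  calc (-1 : K) ^ a = (-1 : K) ^ a * ((-1 : K) ^ b * (-1 : K) ^ b) := by rw [h2, mul_one]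
    _ = ((-1 : K) ^ a * (-1 : K) ^ b) * (-1 : K) ^ b := by ring
    _ = (-1 : K) ^ b := by rw [h1, one_mul]

noncomputable def flipIdx {k : ℕ} (lam : Fin k → ℕ) (hmono : Antitone lam)
    (hcard : ∀ m : ℕ, Even m → Even ((Finset.univ.filter fun r => lam r = m)).card) :
    ((r : Fin k) × Fin (lam r)) → ((r : Fin k) × Fin (lam r)) :=
  fun y => ⟨bpair lam hmono hcard y.1, ⟨lam y.1 - 1 - (y.2 : ℕ), by
    rw [lam_bpair lam hmono hcard]; have := y.2.2; omega⟩⟩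

section
variable {K : Type*} [Field K] {n k : ℕ} (lam : Fin k → ℕ)
  (hmono : Antitone lam)
  (hcard : ∀ m : ℕ, Even m → Even ((Finset.univ.filter fun r => lam r = m)).card)
  (hn : ∑ r, lam r = n)

noncomputable def tauFun : Fin n → Fin n := fun i =>
  idxEquiv lam hn (flipIdx lam hmono hcard ((idxEquiv lam hn).symm i))

theorem tauFun_apply (y : (r : Fin k) × Fin (lam r)) :
    tauFun lam hmono hcard hn (idxEquiv lam hn y) =
      idxEquiv lam hn (flipIdx lam hmono hcard y) := by
  rw [tauFun, Equiv.symm_apply_apply]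

theorem tauFun_tauFun (i : Fin n) :
    tauFun lam hmono hcard hn (tauFun lam hmono hcard hn i) = i := by
  obtain ⟨⟨r, p⟩, rfl⟩ : ∃ y, idxEquiv lam hn y = i := ⟨_, (idxEquiv lam hn).apply_symm_apply i⟩
  rw [tauFun_apply, tauFun_apply]
  have h1 : bpair lam hmono hcard (bpair lam hmono hcard r) = r := bpair_bpair lam hmono hcard r
  have h2 : lam (bpair lam hmono hcard r) = lam r := lam_bpair lam hmono hcard r
  apply Fin.ext
  show psum lam (bpair lam hmono hcard (bpair lam hmono hcard r)) +
      (lam (bpair lam hmono hcard r) - 1 - (lam r - 1 - (p : ℕ))) = psum lam r + (p : ℕ)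
  rw [h1, h2]
  have := p.2
  omega

noncomputable def sgnK {k : ℕ} (lam : Fin k → ℕ) (hmono : Antitone lam)
    (hcard : ∀ m : ℕ, Even m → Even ((Finset.univ.filter fun r => lam r = m)).card)
    (K : Type*) [Field K] : ((r : Fin k) × Fin (lam r)) → K := fun y =>
  (if (bpair lam hmono hcard y.1 : ℕ) < (y.1 : ℕ) then (-1 : K) ^ (lam y.1 - 1) else 1) *
    (-1 : K) ^ (y.2 : ℕ)

theorem sgnK_ne_zero (y : (r : Fin k) × Fin (lam r)) : sgnK lam hmono hcard K y ≠ 0 := by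
  apply mul_ne_zero
  · split_ifs
    · exact pow_ne_zero _ (neg_ne_zero.2 one_ne_zero)
    · exact one_ne_zero
  · exact pow_ne_zero _ (neg_ne_zero.2 one_ne_zero)

theorem sgnK_flip (y : (r : Fin k) × Fin (lam r)) :
    sgnK lam hmono hcard K (flipIdx lam hmono hcard y) = sgnK lam hmono hcard K y := by
  obtain ⟨r, p⟩ := y
  have h2 : lam (bpair lam hmono hcard r) = lam r := lam_bpair lam hmono hcard r
  have h3 : bpair lam hmono hcard (bpair lam hmono hcard r) = r := bpair_bpair lam hmono hcard r
  have hp : (p : ℕ) < lam r := p.2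
  show (if (bpair lam hmono hcard (bpair lam hmono hcard r) : ℕ) < (bpair lam hmono hcard r : ℕ)
      then (-1 : K) ^ (lam (bpair lam hmono hcard r) - 1) else 1) * (-1 : K) ^ (lam r - 1 - (p : ℕ)) =
    (if (bpair lam hmono hcard r : ℕ) < (r : ℕ) then (-1 : K) ^ (lam r - 1) else 1) *
      (-1 : K) ^ (p : ℕ)
  rw [h3, h2]
  rcases lt_trichotomy ((bpair lam hmono hcard r : ℕ)) ((r : ℕ)) with hlt | heq | hgt
  · rw [if_neg (by omega), if_pos hlt, one_mul, ← pow_add]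
    exact negpow_eq ⟨lam r - 1, by omega⟩
  · have hfix : bpair lam hmono hcard r = r := Fin.ext heq
    have hodd : ¬ Even (lam r) := lam_odd_of_fixed lam hmono hcard r hfix
    have hev : Even (lam r - 1) := Nat.Odd.sub_odd (Nat.not_even_iff_odd.1 hodd) odd_one
    rw [if_neg (by omega), if_neg (by omega), one_mul, one_mul]
    apply negpow_eq
    have hre : lam r - 1 - (p : ℕ) + (p : ℕ) = lam r - 1 := by omega
    rw [hre]
    exact hev
  · rw [if_pos hgt, if_neg (by omega), one_mul, ← pow_add]
    exact negpow_eq ⟨lam r - 1, by omega⟩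

noncomputable def consA : Matrix (Fin n) (Fin n) K := Matrix.of fun i j =>
  if j = tauFun lam hmono hcard hn i then sgnK lam hmono hcard K ((idxEquiv lam hn).symm i)
  else 0

theorem consA_isSymm : (consA lam hmono hcard hn (K := K)).IsSymm := by
  rw [Matrix.IsSymm]
  ext i j
  rw [Matrix.transpose_apply, consA]
  simp only [Matrix.of_apply]
  by_cases h : j = tauFun lam hmono hcard hn i
  · rw [if_pos h, if_pos (by rw [h, tauFun_tauFun])]
    subst h
    obtain ⟨y, rfl⟩ : ∃ y, idxEquiv lam hn y = i := ⟨_, (idxEquiv lam hn).apply_symm_apply i⟩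
    rw [tauFun_apply, Equiv.symm_apply_apply, Equiv.symm_apply_apply, sgnK_flip]
  · rw [if_neg (fun hc => h (by rw [hc, tauFun_tauFun])), if_neg h]

theorem consA_apply (r : Fin k) (p : ℕ) (hp : p < lam r) (r' : Fin k) (q : ℕ)
    (hq : q < lam r') :
    consA lam hmono hcard hn (K := K) (blockIdx lam hn r p hp) (blockIdx lam hn r' q hq) =
      if r' = bpair lam hmono hcard r ∧ p + q = lam r - 1 then
        (if (bpair lam hmono hcard r : ℕ) < (r : ℕ) then (-1 : K) ^ (lam r - 1) else 1) *
          (-1 : K) ^ p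
      else 0 := by
  have hkey : tauFun lam hmono hcard hn (blockIdx lam hn r p hp) =
      blockIdx lam hn (bpair lam hmono hcard r) (lam r - 1 - p)
        (by rw [lam_bpair lam hmono hcard]; omega) := by
    rw [show blockIdx lam hn r p hp = idxEquiv lam hn ⟨r, ⟨p, hp⟩⟩ from rfl, tauFun_apply]
    rfl
  rw [consA]
  simp only [Matrix.of_apply]
  by_cases hc : r' = bpair lam hmono hcard r ∧ p + q = lam r - 1
  · rw [if_pos hc, if_pos]
    · rw [show blockIdx lam hn r p hp = idxEquiv lam hn ⟨r, ⟨p, hp⟩⟩ from rfl,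
        Equiv.symm_apply_apply]
      rfl
    · rw [hkey]
      apply Fin.ext
      show psum lam r' + q = psum lam (bpair lam hmono hcard r) + (lam r - 1 - p)
      rw [hc.1]
      omega
  · rw [if_neg hc, if_neg]
    intro hcc
    rw [hkey] at hcc
    obtain ⟨he1, he2⟩ := blockIdx_inj lam hn _ _ hcc
    exact hc ⟨he1, by omega⟩

theorem consA_rel :
    jordanNilpotent K n k lam * consA lam hmono hcard hn +
      consA lam hmono hcard hn * (jordanNilpotent K n k lam)ᵀ = 0 := by
  ext i j
  rw [Matrix.add_apply, Matrix.zero_apply]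
  obtain ⟨⟨r, p⟩, rfl⟩ : ∃ y, idxEquiv lam hn y = i := ⟨_, (idxEquiv lam hn).apply_symm_apply i⟩
  obtain ⟨⟨r', q⟩, rfl⟩ : ∃ y, idxEquiv lam hn y = j := ⟨_, (idxEquiv lam hn).apply_symm_apply j⟩
  rw [show idxEquiv lam hn ⟨r, p⟩ = blockIdx lam hn r p.1 p.2 from rfl,
    show idxEquiv lam hn ⟨r', q⟩ = blockIdx lam hn r' q.1 q.2 from rfl,
    jordan_mul_apply lam hn _ r p.1 p.2, mul_jordan_transpose_apply lam hn _ r' q.1 q.2]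
  have hlr : lam (bpair lam hmono hcard r) = lam r := lam_bpair lam hmono hcard r
  by_cases h1 : (p : ℕ) + 1 < lam r <;> by_cases h2 : (q : ℕ) + 1 < lam r'
  · rw [dif_pos h1, dif_pos h2, consA_apply, consA_apply]
    by_cases hc : r' = bpair lam hmono hcard r ∧ (p : ℕ) + 1 + (q : ℕ) = lam r - 1
    · have hc2 : r' = bpair lam hmono hcard r ∧ (p : ℕ) + ((q : ℕ) + 1) = lam r - 1 :=
        ⟨hc.1, by omega⟩
      rw [if_pos hc, if_pos hc2, pow_succ]
      ring
    · have hc2 : ¬ (r' = bpair lam hmono hcard r ∧ (p : ℕ) + ((q : ℕ) + 1) = lam r - 1) :=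
        fun hcc => hc ⟨hcc.1, by omega⟩
      rw [if_neg hc, if_neg hc2, add_zero]
  · rw [dif_pos h1, dif_neg h2, consA_apply, add_zero]
    rw [if_neg]
    rintro ⟨hcc1, hcc2⟩
    have : lam r' = lam r := by rw [hcc1, hlr]
    have := q.2
    omega
  · rw [dif_neg h1, dif_pos h2, consA_apply, zero_add]
    rw [if_neg]
    rintro ⟨hcc1, hcc2⟩
    have := p.2
    omega
  · rw [dif_neg h1, dif_neg h2, add_zero]

theorem consA_det_ne_zero : (consA lam hmono hcard hn (K := K)).det ≠ 0 := by
  set A := consA lam hmono hcard hn (K := K) with hA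
  set w : Fin n → K := fun i => sgnK lam hmono hcard K ((idxEquiv lam hn).symm i) *
    sgnK lam hmono hcard K ((idxEquiv lam hn).symm (tauFun lam hmono hcard hn i)) with hw
  have hAA : A * A = Matrix.diagonal w := by
    ext i j
    rw [Matrix.mul_apply]
    rw [Finset.sum_eq_single (tauFun lam hmono hcard hn i)]
    · rw [hA, consA]
      simp only [Matrix.of_apply]
      rw [if_true, tauFun_tauFun]
      by_cases hij : j = i
      · subst hij
        rw [if_pos rfl, Matrix.diagonal_apply_eq, hw]
      · rw [if_neg hij, Matrix.diagonal_apply_ne' _ hij, mul_zero]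
    · intro l _ hl
      rw [hA, consA]
      simp only [Matrix.of_apply]
      rw [if_neg hl, zero_mul]
    · simp
  have hwne : ∀ i, w i ≠ 0 := fun i =>
    mul_ne_zero (sgnK_ne_zero lam hmono hcard _) (sgnK_ne_zero lam hmono hcard _)
  have hdd : A.det * A.det ≠ 0 := by
    rw [← Matrix.det_mul, hAA, Matrix.det_diagonal]
    exact Finset.prod_ne_zero_iff.2 (fun i _ => hwne i)
  exact fun h => hdd (by rw [h, mul_zero])

end

/-- There is a nondegenerate symmetric matrix `A` with `N_λ * A + A * N_λᵀ = 0` iff every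
even integer occurs as a part of `λ` an even number of times. -/
theorem jordan_fixed_nondegenerate_iff (K : Type*) [Field K] [CharZero K] (n k : ℕ)
    (lam : Fin k → ℕ) (hpos : ∀ r, 1 ≤ lam r) (hmono : Antitone lam)
    (hn : ∑ r, lam r = n) :
    (∃ A : Matrix (Fin n) (Fin n) K, A.IsSymm ∧
        jordanNilpotent K n k lam * A + A * (jordanNilpotent K n k lam)ᵀ = 0 ∧
        A.det ≠ 0) ↔
      ∀ m : ℕ, Even m → Even ((Finset.univ.filter fun r => lam r = m)).card := by
  constructor
  · rintro ⟨A, hsym, hA, hdet⟩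
    exact forward_direction lam hpos hn A hsym hA hdet
  · intro hcard
    exact ⟨consA lam hmono hcard hn, consA_isSymm lam hmono hcard hn,
      consA_rel lam hmono hcard hn, consA_det_ne_zero lam hmono hcard hn⟩
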